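/- arXiv:2210.00082 — 2 statements merged into one kernel-verified Lean document; each statement's English description precedes it below -/
import Mathlib

section
/- Let ν_n(z) = (z^n/(b+1)_n)·∑_{x≥0} z^x/((b+n+1)_x x!) with b > −1. Then for m ≤ n, the quantity L[φ_n φ_m] = ∑_{k=0}^{m} C(n,k)C(m,k)k!·ν_{n+m-k}(z) satisfies L[φ_n φ_m] = C(n,m)·(m!/(b+1)_n)·z^n + O(z^{n+1}) as z → 0⁺; in particular lim_{z→0⁺} L[φ_n φ_m]/z^n = C(n,m)·m!/(b+1)_n. -/
open Filter Topology Asymptotics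

/-- The Pochhammer symbol `(c)_n = ∏_{j=0}^{n-1}(c+j)`. -/
noncomputable def poch (c : ℝ) (n : ℕ) : ℝ := ∏ j ∈ Finset.range n, (c + j)

/-- The moment `ν_n(z)` of the generalized Charlier functional on the falling
factorial basis. -/
noncomputable def nu (b : ℝ) (n : ℕ) (z : ℝ) : ℝ :=
  z ^ n / poch (b + 1) n * ∑' x : ℕ, z ^ x / (poch (b + n + 1) x * x.factorial)

lemma poch_pos {c : ℝ} (hc : 0 < c) (n : ℕ) : 0 < poch c n :=
  Finset.prod_pos fun j _ => by positivity

lemma poch_ge_min {c : ℝ} (hc : 0 < c) (n : ℕ) : min c 1 ≤ poch c n := by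
  induction n with
  | zero => simpa [poch] using min_le_right c 1
  | succ k ih =>
    rw [poch, Finset.prod_range_succ, ← poch]
    rcases Nat.eq_zero_or_pos k with hk | hk
    · subst hk
      simpa [poch] using min_le_left c 1
    · have h1 : (1:ℝ) ≤ c + k := by
        have : (1:ℝ) ≤ (k:ℝ) := by exact_mod_cast hk
        linarith
      calc min c 1 ≤ poch c k * 1 := by simpa using ih
        _ ≤ poch c k * (c + k) := mul_le_mul_of_nonneg_left h1 (poch_pos hc k).le

lemma summable_aux {c : ℝ} (hc : 0 < c) (z : ℝ) :
    Summable (fun x : ℕ => z ^ x / (poch c x * x.factorial)) := by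
  have hmin : 0 < min c 1 := lt_min hc one_pos
  apply Summable.of_norm
  have h := (Real.summable_pow_div_factorial |z|).mul_left (1 / min c 1)
  refine h.of_nonneg_of_le (fun x => norm_nonneg _) fun x => ?_
  have hfac : (0:ℝ) < x.factorial := by exact_mod_cast x.factorial_pos
  have hbound : |z| ^ x / (poch c x * x.factorial) ≤ |z| ^ x / (min c 1 * x.factorial) :=
    div_le_div_of_nonneg_left (by positivity) (by positivity)
      (mul_le_mul_of_nonneg_right (poch_ge_min hc x) hfac.le)
  calc ‖z ^ x / (poch c x * x.factorial)‖
      = |z| ^ x / (poch c x * x.factorial) := by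
        rw [Real.norm_eq_abs, abs_div, abs_pow]
        congr 1
        exact abs_of_pos (mul_pos (poch_pos hc x) hfac)
    _ ≤ |z| ^ x / (min c 1 * x.factorial) := hbound
    _ = 1 / min c 1 * (|z| ^ x / x.factorial) := by ring

/-- `e = ∑ 1/x!`. -/
noncomputable def Efac : ℝ := ∑' x : ℕ, (1:ℝ) / x.factorial

lemma summable_one_div_factorial : Summable (fun x : ℕ => (1:ℝ) / x.factorial) := by
  simpa using Real.summable_pow_div_factorial 1

lemma Efac_nonneg : 0 ≤ Efac := tsum_nonneg fun x => by positivity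

lemma nu_bound (b : ℝ) (hb : -1 < b) (j : ℕ) :
    ∃ C : ℝ, 0 ≤ C ∧ ∀ z ∈ Set.Ioo (0:ℝ) 1,
      |nu b j z - z ^ j / poch (b + 1) j| ≤ C * z ^ (j + 1) := by
  have hj : (0:ℝ) ≤ j := Nat.cast_nonneg j
  have hc : (0:ℝ) < b + j + 1 := by linarith
  have hb1 : (0:ℝ) < b + 1 := by linarith
  have hmin : 0 < min (b + (j:ℝ) + 1) 1 := lt_min hc one_pos
  have hPj := poch_pos hb1 j
  refine ⟨(Efac / min (b + j + 1) 1) / poch (b + 1) j, ?_, ?_⟩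
  · have := Efac_nonneg
    positivity
  intro z hz
  obtain ⟨hz0, hz1⟩ := hz
  have hs := summable_aux hc z
  have hS : (∑' x : ℕ, z ^ x / (poch (b + j + 1) x * x.factorial))
      = 1 + ∑' x : ℕ, z ^ (x + 1) / (poch (b + j + 1) (x + 1) * (x + 1).factorial) := by
    rw [Summable.tsum_eq_zero_add hs]
    simp [poch]
  have htail_nonneg :
      0 ≤ ∑' x : ℕ, z ^ (x + 1) / (poch (b + j + 1) (x + 1) * (x + 1).factorial) :=
    tsum_nonneg fun x => div_nonneg (pow_nonneg hz0.le _)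
      (mul_nonneg (poch_pos hc _).le (Nat.cast_nonneg _))
  have htail : (∑' x : ℕ, z ^ (x + 1) / (poch (b + j + 1) (x + 1) * (x + 1).factorial))
      ≤ z * (Efac / min (b + j + 1) 1) := by
    have hs' : Summable (fun x : ℕ =>
        z ^ (x + 1) / (poch (b + j + 1) (x + 1) * (x + 1).factorial)) :=
      (summable_nat_add_iff 1).mpr hs
    have hg : Summable (fun x : ℕ => z / min (b + j + 1) 1 * ((1:ℝ) / x.factorial)) :=
      summable_one_div_factorial.mul_left _
    calc (∑' x : ℕ, z ^ (x + 1) / (poch (b + j + 1) (x + 1) * (x + 1).factorial))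
        ≤ ∑' x : ℕ, z / min (b + j + 1) 1 * ((1:ℝ) / x.factorial) := by
          refine Summable.tsum_le_tsum (fun x => ?_) hs' hg
          have h1 : z ^ (x + 1) ≤ z := by
            calc z ^ (x + 1) = z * z ^ x := by ring
              _ ≤ z * 1 := mul_le_mul_of_nonneg_left (pow_le_one₀ hz0.le hz1.le) hz0.le
              _ = z := mul_one z
          have h2 : min (b + j + 1) 1 * x.factorial
              ≤ poch (b + j + 1) (x + 1) * (x + 1).factorial := by
            apply mul_le_mul (poch_ge_min hc _) ?_ (by positivity) (poch_pos hc _).le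
            exact_mod_cast Nat.factorial_le (Nat.le_succ x)
          calc z ^ (x + 1) / (poch (b + j + 1) (x + 1) * (x + 1).factorial)
              ≤ z / (min (b + j + 1) 1 * x.factorial) :=
                div_le_div₀ hz0.le h1 (by positivity) h2
            _ = z / min (b + j + 1) 1 * ((1:ℝ) / x.factorial) := by ring
      _ = z / min (b + j + 1) 1 * Efac := tsum_mul_left
      _ = z * (Efac / min (b + j + 1) 1) := by ring
  rw [nu, hS]
  set T := ∑' x : ℕ, z ^ (x + 1) / (poch (b + j + 1) (x + 1) * (x + 1).factorial) with hT
  have heq : z ^ j / poch (b + 1) j * (1 + T) - z ^ j / poch (b + 1) j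
      = z ^ j / poch (b + 1) j * T := by ring
  rw [heq, abs_of_nonneg (mul_nonneg (by positivity) htail_nonneg)]
  calc z ^ j / poch (b + 1) j * T
      ≤ z ^ j / poch (b + 1) j * (z * (Efac / min (b + j + 1) 1)) :=
        mul_le_mul_of_nonneg_left htail (by positivity)
    _ = Efac / min (b + j + 1) 1 / poch (b + 1) j * z ^ (j + 1) := by
        rw [pow_succ]; ring

lemma tendsto_of_bound (F : ℝ → ℝ) (c Ct : ℝ) (n : ℕ)
    (key : ∀ z ∈ Set.Ioo (0:ℝ) 1, |F z - c * z ^ n| ≤ Ct * z ^ (n + 1)) :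
    (fun z : ℝ => F z - c * z ^ n) =O[𝓝[>] (0:ℝ)] (fun z : ℝ => z ^ (n + 1)) ∧
    Tendsto (fun z : ℝ => F z / z ^ n) (𝓝[>] (0:ℝ)) (𝓝 c) := by
  have hIoo : Set.Ioo (0:ℝ) 1 ∈ 𝓝[>] (0:ℝ) :=
    Ioo_mem_nhdsGT_of_mem ⟨le_refl (0:ℝ), one_pos⟩
  constructor
  · rw [Asymptotics.isBigO_iff]
    refine ⟨Ct, ?_⟩
    filter_upwards [hIoo] with z hz
    rw [Real.norm_eq_abs, Real.norm_eq_abs, abs_of_pos (pow_pos hz.1 _)]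
    exact key z hz
  · have h2 : Tendsto (fun z : ℝ => (F z - c * z ^ n) / z ^ n) (𝓝[>] (0:ℝ)) (𝓝 0) := by
      refine squeeze_zero_norm' (a := fun z : ℝ => Ct * z) ?_ ?_
      · filter_upwards [hIoo] with z hz
        rw [Real.norm_eq_abs, abs_div, abs_of_pos (pow_pos hz.1 n),
          div_le_iff₀ (pow_pos hz.1 n)]
        calc |F z - c * z ^ n| ≤ Ct * z ^ (n + 1) := key z hz
          _ = Ct * z * z ^ n := by rw [pow_succ]; ring
      · have : Tendsto (fun z : ℝ => Ct * z) (𝓝 (0:ℝ)) (𝓝 (Ct * 0)) :=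
          (continuous_const.mul continuous_id).tendsto 0
        simpa using this.mono_left nhdsWithin_le_nhds
    have h3 : Tendsto (fun z : ℝ => c + (F z - c * z ^ n) / z ^ n) (𝓝[>] (0:ℝ))
        (𝓝 (c + 0)) := tendsto_const_nhds.add h2
    rw [add_zero] at h3
    refine h3.congr' ?_
    filter_upwards [self_mem_nhdsWithin] with z hz
    have hzne : z ^ n ≠ 0 := (pow_pos hz n).ne'
    rw [sub_div, mul_div_assoc, div_self hzne, mul_one]
    ring

theorem L_ffact_mul_ffact_asymptotics (b : ℝ) (hb : -1 < b) (n m : ℕ) (hmn : m ≤ n) :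
    (fun z : ℝ =>
        (∑ k ∈ Finset.range (m + 1),
          (n.choose k : ℝ) * (m.choose k : ℝ) * (k.factorial : ℝ) * nu b (n + m - k) z) -
          (n.choose m : ℝ) * (m.factorial : ℝ) / poch (b + 1) n * z ^ n)
      =O[𝓝[>] (0 : ℝ)] (fun z : ℝ => z ^ (n + 1)) ∧
    Tendsto
      (fun z : ℝ =>
        (∑ k ∈ Finset.range (m + 1),
          (n.choose k : ℝ) * (m.choose k : ℝ) * (k.factorial : ℝ) * nu b (n + m - k) z) / z ^ n)
      (𝓝[>] (0 : ℝ))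
      (𝓝 ((n.choose m : ℝ) * (m.factorial : ℝ) / poch (b + 1) n)) := by
  have hb1 : (0:ℝ) < b + 1 := by linarith
  choose C hC0 hC using fun j => nu_bound b hb j
  have key : ∀ z ∈ Set.Ioo (0:ℝ) 1,
      |(∑ k ∈ Finset.range (m + 1),
          (n.choose k : ℝ) * (m.choose k : ℝ) * (k.factorial : ℝ) * nu b (n + m - k) z) -
        (n.choose m : ℝ) * (m.factorial : ℝ) / poch (b + 1) n * z ^ n|
      ≤ ((∑ k ∈ Finset.range (m + 1),
            (n.choose k : ℝ) * (m.choose k : ℝ) * (k.factorial : ℝ) * C (n + m - k))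
        + ∑ k ∈ Finset.range m,
            (n.choose k : ℝ) * (m.choose k : ℝ) * (k.factorial : ℝ) / poch (b + 1) (n + m - k))
        * z ^ (n + 1) := by
    intro z hz
    obtain ⟨hz0, hz1⟩ := hz
    have hpow : ∀ p : ℕ, n + 1 ≤ p → z ^ p ≤ z ^ (n + 1) :=
      fun p hp => pow_le_pow_of_le_one hz0.le hz1.le hp
    have hdecomp : (∑ k ∈ Finset.range (m + 1),
          (n.choose k : ℝ) * (m.choose k : ℝ) * (k.factorial : ℝ) * nu b (n + m - k) z) -
        (n.choose m : ℝ) * (m.factorial : ℝ) / poch (b + 1) n * z ^ n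
        = (∑ k ∈ Finset.range (m + 1), (n.choose k : ℝ) * (m.choose k : ℝ) * (k.factorial : ℝ)
              * (nu b (n + m - k) z - z ^ (n + m - k) / poch (b + 1) (n + m - k)))
          + ∑ k ∈ Finset.range m, (n.choose k : ℝ) * (m.choose k : ℝ) * (k.factorial : ℝ)
              * (z ^ (n + m - k) / poch (b + 1) (n + m - k)) := by
      have h1 : ∑ k ∈ Finset.range (m + 1),
            (n.choose k : ℝ) * (m.choose k : ℝ) * (k.factorial : ℝ)
              * (z ^ (n + m - k) / poch (b + 1) (n + m - k))
          = (∑ k ∈ Finset.range m, (n.choose k : ℝ) * (m.choose k : ℝ) * (k.factorial : ℝ)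
              * (z ^ (n + m - k) / poch (b + 1) (n + m - k)))
            + (n.choose m : ℝ) * (m.factorial : ℝ) / poch (b + 1) n * z ^ n := by
        rw [Finset.sum_range_succ]
        congr 1
        rw [Nat.add_sub_cancel]
        simp [Nat.choose_self]
        ring
      simp only [mul_sub, Finset.sum_sub_distrib]
      rw [h1]
      ring
    have hG : |∑ k ∈ Finset.range (m + 1),
          (n.choose k : ℝ) * (m.choose k : ℝ) * (k.factorial : ℝ)
            * (nu b (n + m - k) z - z ^ (n + m - k) / poch (b + 1) (n + m - k))|
        ≤ (∑ k ∈ Finset.range (m + 1),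
            (n.choose k : ℝ) * (m.choose k : ℝ) * (k.factorial : ℝ) * C (n + m - k))
          * z ^ (n + 1) := by
      rw [Finset.sum_mul]
      refine (Finset.abs_sum_le_sum_abs _ _).trans (Finset.sum_le_sum fun k hk => ?_)
      have hk' : k ≤ m := Nat.lt_succ_iff.mp (Finset.mem_range.mp hk)
      have hA : (0:ℝ) ≤ (n.choose k : ℝ) * (m.choose k : ℝ) * (k.factorial : ℝ) := by positivity
      rw [abs_mul, abs_of_nonneg hA]
      calc (n.choose k : ℝ) * (m.choose k : ℝ) * (k.factorial : ℝ)
            * |nu b (n + m - k) z - z ^ (n + m - k) / poch (b + 1) (n + m - k)|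
          ≤ (n.choose k : ℝ) * (m.choose k : ℝ) * (k.factorial : ℝ)
            * (C (n + m - k) * z ^ (n + m - k + 1)) :=
            mul_le_mul_of_nonneg_left (hC (n + m - k) z ⟨hz0, hz1⟩) hA
        _ ≤ (n.choose k : ℝ) * (m.choose k : ℝ) * (k.factorial : ℝ)
            * (C (n + m - k) * z ^ (n + 1)) :=
            mul_le_mul_of_nonneg_left
              (mul_le_mul_of_nonneg_left (hpow _ (by omega)) (hC0 _)) hA
        _ = (n.choose k : ℝ) * (m.choose k : ℝ) * (k.factorial : ℝ) * C (n + m - k)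
            * z ^ (n + 1) := by ring
    have hH : |∑ k ∈ Finset.range m,
          (n.choose k : ℝ) * (m.choose k : ℝ) * (k.factorial : ℝ)
            * (z ^ (n + m - k) / poch (b + 1) (n + m - k))|
        ≤ (∑ k ∈ Finset.range m,
            (n.choose k : ℝ) * (m.choose k : ℝ) * (k.factorial : ℝ) / poch (b + 1) (n + m - k))
          * z ^ (n + 1) := by
      rw [Finset.sum_mul]
      refine (Finset.abs_sum_le_sum_abs _ _).trans (Finset.sum_le_sum fun k hk => ?_)
      have hk' : k < m := Finset.mem_range.mp hk
      have hP := poch_pos hb1 (n + m - k)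
      have hA : (0:ℝ) ≤ (n.choose k : ℝ) * (m.choose k : ℝ) * (k.factorial : ℝ) := by positivity
      rw [abs_of_nonneg (by positivity)]
      calc (n.choose k : ℝ) * (m.choose k : ℝ) * (k.factorial : ℝ)
            * (z ^ (n + m - k) / poch (b + 1) (n + m - k))
          ≤ (n.choose k : ℝ) * (m.choose k : ℝ) * (k.factorial : ℝ)
            * (z ^ (n + 1) / poch (b + 1) (n + m - k)) := by
            apply mul_le_mul_of_nonneg_left _ hA
            exact (div_le_div_iff_of_pos_right hP).mpr (hpow _ (by omega))
        _ = (n.choose k : ℝ) * (m.choose k : ℝ) * (k.factorial : ℝ)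
            / poch (b + 1) (n + m - k) * z ^ (n + 1) := by ring
    calc |(∑ k ∈ Finset.range (m + 1),
          (n.choose k : ℝ) * (m.choose k : ℝ) * (k.factorial : ℝ) * nu b (n + m - k) z) -
        (n.choose m : ℝ) * (m.factorial : ℝ) / poch (b + 1) n * z ^ n|
        = |(∑ k ∈ Finset.range (m + 1), (n.choose k : ℝ) * (m.choose k : ℝ) * (k.factorial : ℝ)
              * (nu b (n + m - k) z - z ^ (n + m - k) / poch (b + 1) (n + m - k)))
          + ∑ k ∈ Finset.range m, (n.choose k : ℝ) * (m.choose k : ℝ) * (k.factorial : ℝ)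
              * (z ^ (n + m - k) / poch (b + 1) (n + m - k))| := by rw [hdecomp]
      _ ≤ _ := (abs_add_le _ _).trans (add_le_add hG hH)
      _ = _ := by rw [add_mul]
  exact tendsto_of_bound _ _ _ _ key
end

section
/- Let {P_n} be monic polynomials orthogonal with respect to a functional L with norms h_n, satisfying ΔP_n = n P_{n-1} + ξ_n P_{n-2} where ξ_n h_{n-2} = h_n/z. Let {S_n} be monic polynomials orthogonal with respect to ⟨p,q⟩ = L[pq] + λ L[Δp Δq] with norms h̃_n. Then P_n = S_n + a_n S_{n-1} where a_n = (n−1)λ h_n / (z h̃_{n-1}) for all n ≥ 2. -/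
open Polynomial Finset

/-- The forward difference operator on polynomials: `Δp = p(x+1) - p(x)`. -/
noncomputable def fdiff (p : Polynomial ℝ) : Polynomial ℝ := p.comp (X + 1) - p

lemma fdiff_add (p q : Polynomial ℝ) : fdiff (p + q) = fdiff p + fdiff q := by
  simp only [fdiff, add_comp]; ring

lemma fdiff_sub (p q : Polynomial ℝ) : fdiff (p - q) = fdiff p - fdiff q := by
  simp only [fdiff, sub_comp]; ring

lemma fdiff_C_mul (c : ℝ) (p : Polynomial ℝ) : fdiff (C c * p) = C c * fdiff p := by
  simp only [fdiff, mul_comp, C_comp]; ring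

lemma fdiff_zero : fdiff (0 : Polynomial ℝ) = 0 := by simp [fdiff]

lemma mysum_comp (s : Finset ℕ) (f : ℕ → Polynomial ℝ) (q : Polynomial ℝ) :
    (∑ i ∈ s, f i).comp q = ∑ i ∈ s, (f i).comp q :=
  Polynomial.eval₂_finset_sum _ _ _ _

lemma comp_coeff (p : Polynomial ℝ) (j : ℕ) :
    (p.comp (X + 1)).coeff j = ∑ i ∈ range (p.natDegree + 1), p.coeff i * (i.choose j : ℝ) := by
  conv_lhs => rw [p.as_sum_range, mysum_comp]
  rw [finset_sum_coeff]
  refine Finset.sum_congr rfl fun i _ => ?_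
  rw [monomial_comp, coeff_C_mul, coeff_X_add_one_pow]

lemma fdiff_coeff_high (p : Polynomial ℝ) (j : ℕ) (hj : p.natDegree ≤ j) :
    (fdiff p).coeff j = 0 := by
  rw [fdiff, coeff_sub, comp_coeff]
  rcases lt_or_ge j (p.natDegree + 1) with hlt | hge
  · have : p.natDegree = j := le_antisymm hj (Nat.lt_succ_iff.mp hlt)
    rw [Finset.sum_eq_single j]
    · simp
    · intro i hi hij
      rcases lt_or_gt_of_ne hij with h1 | h1
      · simp [Nat.choose_eq_zero_of_lt h1]
      · exact absurd (Nat.lt_succ_iff.mp (mem_range.mp hi)) (by omega)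
    · intro hj'; exact absurd (mem_range.mpr (by omega)) hj'
  · rw [coeff_eq_zero_of_natDegree_lt (by omega), Finset.sum_eq_zero, sub_zero]
    intro i hi
    have := mem_range.mp hi
    simp [Nat.choose_eq_zero_of_lt (by omega : i < j)]

lemma fdiff_coeff_pred (p : Polynomial ℝ) (m : ℕ) (hm : p.natDegree = m) (h1 : 1 ≤ m) :
    (fdiff p).coeff (m - 1) = m * p.coeff m := by
  rw [fdiff, coeff_sub, comp_coeff, hm]
  have key : ∑ i ∈ range (m + 1), p.coeff i * (i.choose (m-1) : ℝ)
      = p.coeff (m-1) * ((m-1).choose (m-1) : ℝ) + p.coeff m * (m.choose (m-1) : ℝ) := by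
    rw [Finset.sum_eq_add_of_mem (m-1) m (by simp) (by simp) (by omega)]
    intro i hi hne
    rcases lt_or_gt_of_ne hne.1 with hh | hh
    · simp [Nat.choose_eq_zero_of_lt hh]
    · have hir := mem_range.mp hi
      exact absurd (by omega : i = m) hne.2
  rw [key, Nat.choose_self]
  have : m.choose (m-1) = m := by
    rw [← Nat.choose_symm (by omega : m - 1 ≤ m)]
    simp [Nat.sub_sub_self (by omega : 1 ≤ m)]
  rw [this]; ring

lemma coeff_monic_deg (Q : Polynomial ℝ) (m : ℕ) (hQm : Q.Monic) (hQd : Q.natDegree = m) :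
    Q.coeff m = 1 := by
  have := hQm.leadingCoeff
  rwa [Polynomial.leadingCoeff, hQd] at this

lemma span_basis (Q : ℕ → Polynomial ℝ) (hQm : ∀ n, (Q n).Monic)
    (hQd : ∀ n, (Q n).natDegree = n) :
    ∀ m (p : Polynomial ℝ), (∀ j, m ≤ j → p.coeff j = 0) →
      ∃ c : ℕ → ℝ, p = ∑ k ∈ Finset.range m, C (c k) * Q k := by
  intro m
  induction m with
  | zero =>
    intro p hp
    exact ⟨0, by simp [Polynomial.ext_iff]; intro j; exact hp j (Nat.zero_le j)⟩
  | succ m ih =>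
    intro p hp
    have hcoeff : ∀ j, m ≤ j → (p - C (p.coeff m) * Q m).coeff j = 0 := by
      intro j hj
      rw [coeff_sub, coeff_C_mul]
      by_cases hjm : j = m
      · subst hjm
        rw [coeff_monic_deg (Q j) j (hQm j) (hQd j)]; ring
      · have hq : (Q m).coeff j = 0 :=
          coeff_eq_zero_of_natDegree_lt (by rw [hQd m]; omega)
        rw [hp j (by omega), hq]; ring
    obtain ⟨c, hc⟩ := ih _ hcoeff
    refine ⟨fun k => if k = m then p.coeff m else c k, ?_⟩
    rw [Finset.sum_range_succ]
    have h1 : ∑ x ∈ range m, C ((fun k => if k = m then p.coeff m else c k) x) * Q x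
        = ∑ x ∈ range m, C (c x) * Q x :=
      Finset.sum_congr rfl fun k hk => by
        have : k ≠ m := by have := mem_range.mp hk; omega
        simp [this]
    rw [h1, ← hc]
    simp

theorem connection_formula (L : Polynomial ℝ →ₗ[ℝ] ℝ) (z lam : ℝ)
    (hz : 0 < z) (hlam : 0 < lam)
    (P S : ℕ → Polynomial ℝ)
    (hPmonic : ∀ n, (P n).Monic) (hPdeg : ∀ n, (P n).natDegree = n)
    (hSmonic : ∀ n, (S n).Monic) (hSdeg : ∀ n, (S n).natDegree = n)
    (h htil : ℕ → ℝ) (hne : ∀ n, h n ≠ 0) (htilne : ∀ n, htil n ≠ 0)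
    (hPortho : ∀ k n, L (P k * P n) = if k = n then h n else 0)
    (ip : Polynomial ℝ → Polynomial ℝ → ℝ)
    (hip : ∀ p q, ip p q = L (p * q) + lam * L (fdiff p * fdiff q))
    (hSortho : ∀ k n, ip (S k) (S n) = if k = n then htil n else 0)
    (ξ : ℕ → ℝ)
    (hstruct : ∀ n, 2 ≤ n →
      fdiff (P n) = C (n : ℝ) * P (n - 1) + C (ξ n) * P (n - 2))
    (hxi : ∀ n, 2 ≤ n → ξ n * h (n - 2) = h n / z) :
    ∀ n, 2 ≤ n →
      P n = S n + C (((n : ℝ) - 1) * lam * h n / (z * htil (n - 1))) * S (n - 1) := by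
  -- linearity of L over C-mul
  have LC : ∀ (c : ℝ) (p : Polynomial ℝ), L (C c * p) = c * L p := by
    intro c p
    rw [← smul_eq_C_mul, map_smul, smul_eq_mul]
  -- orthogonality of P n against low-degree polys
  have Lzero : ∀ N (q : Polynomial ℝ) m, m ≤ N → (∀ j, m ≤ j → q.coeff j = 0) →
      L (P N * q) = 0 := by
    intro N q m hm hq
    obtain ⟨c, hc⟩ := span_basis P hPmonic hPdeg m q hq
    rw [hc, Finset.mul_sum, map_sum]
    refine Finset.sum_eq_zero fun k hk => ?_
    have hkm := mem_range.mp hk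
    have : P N * (C (c k) * P k) = C (c k) * (P k * P N) := by ring
    rw [this, LC, hPortho k N, if_neg (by omega)]
    ring
  -- bilinearity style facts for ip
  have ip_add : ∀ p q r : Polynomial ℝ, ip (p + q) r = ip p r + ip q r := by
    intro p q r
    simp only [hip, fdiff_add, add_mul, map_add]
    ring
  have ip_Cmul : ∀ (c : ℝ) (p r : Polynomial ℝ), ip (C c * p) r = c * ip p r := by
    intro c p r
    simp only [hip, fdiff_C_mul, mul_assoc, LC]
    ring
  have ip_sub : ∀ p q r : Polynomial ℝ, ip (p - q) r = ip p r - ip q r := by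
    intro p q r
    simp only [hip, fdiff_sub, sub_mul, map_sub]
    ring
  have ip_sum : ∀ (s : Finset ℕ) (f : ℕ → Polynomial ℝ) (r : Polynomial ℝ),
      ip (∑ j ∈ s, f j) r = ∑ j ∈ s, ip (f j) r := by
    intro s f r
    induction s using Finset.induction with
    | empty =>
      simp only [Finset.sum_empty]
      simp [hip, fdiff_zero]
    | insert x s hx ih =>
      rw [Finset.sum_insert hx, Finset.sum_insert hx, ip_add, ih]
  intro n hn
  -- key inner products
  have hfdSk : ∀ k : ℕ, ∀ j, k ≤ j → (fdiff (S k)).coeff j = 0 := by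
    intro k j hj
    exact fdiff_coeff_high _ _ (by rw [hSdeg]; exact hj)
  have ipPnSk0 : ∀ k, k ≤ n - 2 → ip (P n) (S k) = 0 := by
    intro k hk
    rw [hip]
    have h1 : L (P n * S k) = 0 := by
      refine Lzero n (S k) (k + 1) (by omega) fun j hj => ?_
      exact coeff_eq_zero_of_natDegree_lt (by rw [hSdeg]; omega)
    have h2 : L (fdiff (P n) * fdiff (S k)) = 0 := by
      rw [hstruct n hn, add_mul, map_add, mul_assoc, mul_assoc, LC, LC]
      rw [Lzero (n-1) _ k (by omega) (hfdSk k), Lzero (n-2) _ k (by omega) (hfdSk k)]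
      ring
    rw [h1, h2]; ring
  have ipPnSn1 : ip (P n) (S (n - 1)) = lam * ((n:ℝ) - 1) * h n / z := by
    rw [hip]
    have h1 : L (P n * S (n-1)) = 0 := by
      refine Lzero n (S (n-1)) n le_rfl fun j hj => ?_
      exact coeff_eq_zero_of_natDegree_lt (by rw [hSdeg]; omega)
    set R := fdiff (S (n-1)) - C ((n:ℝ) - 1) * P (n-2) with hR
    have hRcoeff : ∀ j, n - 2 ≤ j → R.coeff j = 0 := by
      intro j hj
      rw [hR, coeff_sub, coeff_C_mul]
      by_cases hjn : j = n - 2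
      · subst hjn
        have hpred := fdiff_coeff_pred (S (n-1)) (n-1) (hSdeg (n-1)) (by omega)
        have e1 : n - 1 - 1 = n - 2 := by omega
        rw [e1] at hpred
        rw [hpred, coeff_monic_deg (S (n-1)) (n-1) (hSmonic (n-1)) (hSdeg (n-1)),
          coeff_monic_deg (P (n-2)) (n-2) (hPmonic (n-2)) (hPdeg (n-2))]
        have : ((n - 1 : ℕ) : ℝ) = (n : ℝ) - 1 := by
          push_cast [Nat.cast_sub (by omega : 1 ≤ n)]; ring
        rw [this]; ring
      · rw [fdiff_coeff_high _ _ (by rw [hSdeg]; omega),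
          coeff_eq_zero_of_natDegree_lt (by rw [hPdeg]; omega)]
        ring
    have hfd : fdiff (S (n-1)) = C ((n:ℝ) - 1) * P (n-2) + R := by rw [hR]; ring
    have expand : fdiff (P n) * fdiff (S (n-1)) =
        C (n:ℝ) * C ((n:ℝ) - 1) * (P (n-1) * P (n-2)) + C (n:ℝ) * (P (n-1) * R)
        + C (ξ n) * C ((n:ℝ) - 1) * (P (n-2) * P (n-2)) + C (ξ n) * (P (n-2) * R) := by
      rw [hstruct n hn, hfd]; ring
    have hL1 : L (P (n-1) * P (n-2)) = 0 := by
      rw [hPortho, if_neg (by omega)]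
    have hL2 : L (P (n-1) * R) = 0 := Lzero (n-1) R (n-2) (by omega) hRcoeff
    have hL3 : L (P (n-2) * P (n-2)) = h (n-2) := by
      rw [hPortho, if_pos rfl]
    have hL4 : L (P (n-2) * R) = 0 := Lzero (n-2) R (n-2) le_rfl hRcoeff
    rw [expand]
    rw [map_add, map_add, map_add, mul_assoc, mul_assoc, LC, LC, LC, mul_assoc, LC, LC, LC,
      hL1, hL2, hL3, hL4, h1]
    have hx := hxi n hn
    rw [eq_div_iff hz.ne'] at hx
    field_simp
    linear_combination (lam * ((n:ℝ) - 1)) * hx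
  set a : ℝ := ((n : ℝ) - 1) * lam * h n / (z * htil (n - 1)) with ha
  have hDcoeff : ∀ j, n ≤ j → (P n - S n - C a * S (n-1)).coeff j = 0 := by
    intro j hj
    rw [coeff_sub, coeff_sub, coeff_C_mul]
    have hS1 : (S (n-1)).coeff j = 0 :=
      coeff_eq_zero_of_natDegree_lt (by rw [hSdeg]; omega)
    by_cases hjn : j = n
    · subst hjn
      rw [coeff_monic_deg (P j) j (hPmonic j) (hPdeg j),
        coeff_monic_deg (S j) j (hSmonic j) (hSdeg j), hS1]
      ring
    · rw [coeff_eq_zero_of_natDegree_lt (by rw [hPdeg]; omega),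
        coeff_eq_zero_of_natDegree_lt (by rw [hSdeg]; omega), hS1]
      ring
  obtain ⟨c, hc⟩ := span_basis S hSmonic hSdeg n _ hDcoeff
  have hck : ∀ k ∈ range n, c k = 0 := by
    intro k hk
    have hkn := mem_range.mp hk
    have e1 : ip (P n - S n - C a * S (n-1)) (S k) = c k * htil k := by
      rw [hc, ip_sum,
        Finset.sum_congr rfl (fun j _ => by rw [ip_Cmul, hSortho j k]),
        Finset.sum_eq_single k]
      · rw [if_pos rfl]
      · intro j _ hjk; rw [if_neg hjk, mul_zero]
      · intro hk'; exact absurd hk hk'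
    have e2 : ip (P n - S n - C a * S (n-1)) (S k)
        = ip (P n) (S k) - ip (S n) (S k) - a * ip (S (n-1)) (S k) := by
      rw [ip_sub, ip_sub, ip_Cmul]
    have hSnk : ip (S n) (S k) = 0 := by rw [hSortho, if_neg (by omega)]
    have hmain : c k * htil k = 0 := by
      rw [← e1, e2, hSnk]
      by_cases hk1 : k = n - 1
      · subst hk1
        rw [ipPnSn1, hSortho, if_pos rfl, ha]
        have hmul : ((n:ℝ) - 1) * lam * h n / (z * htil (n - 1)) * htil (n - 1)
            = ((n:ℝ) - 1) * lam * h n / z := by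
          rw [div_mul_eq_mul_div, div_eq_div_iff (mul_ne_zero hz.ne' (htilne (n-1))) hz.ne']
          ring
        rw [hmul]
        ring
      · rw [ipPnSk0 k (by omega), hSortho, if_neg (by omega)]
        ring
    exact (mul_eq_zero.mp hmain).resolve_right (htilne k)
  have hD0 : P n - S n - C a * S (n-1) = 0 := by
    rw [hc]
    exact Finset.sum_eq_zero fun k hk => by rw [hck k hk]; simp
  linear_combination hD0
end
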